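/- Fix a real number a ≥ 1 and ε ∈ (0, 1/4], and let k = ⌊a/(4ε)⌋ ≥ 1. For every integer n ≥ k there exists an a-self-bounding function f: {0,1}^n → [0,1] such that every function p: {0,1}^n → ℝ with E[|f − p|] ≤ ε (expectation over the uniform distribution on {0,1}^n) has Fourier degree at least k. -/

import Mathlib

noncomputable section

/-- A function `f : {0,1}^n → ℝ` is `a`-self-bounding. -/
def SelfBounding (n : ℕ) (a : ℝ) (f : (Fin n → Bool) → ℝ) : Prop :=
  ∀ x : Fin n → Bool,
    (∀ i : Fin n,
      f x - min (f (Function.update x i false)) (f (Function.update x i true)) ≤ 1) ∧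
    ∑ i : Fin n,
      (f x - min (f (Function.update x i false)) (f (Function.update x i true))) ≤ a * f x

/-- Expectation with respect to the uniform distribution on `{0,1}^n`. -/
def expect (n : ℕ) (g : (Fin n → Bool) → ℝ) : ℝ :=
  (∑ x : Fin n → Bool, g x) / 2 ^ n

/-- The parity function `χ_S(x) = (-1)^{Σ_{i∈S} x_i}`. -/
def parity (n : ℕ) (S : Finset (Fin n)) (x : Fin n → Bool) : ℝ :=
  (-1 : ℝ) ^ (S.filter (fun i => x i = true)).card

/-- Fourier coefficient `p̂(S) = E[p ⬝ χ_S]`. -/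
def fourierHat (n : ℕ) (p : (Fin n → Bool) → ℝ) (S : Finset (Fin n)) : ℝ :=
  expect n (fun x => p x * parity n S x)

lemma parity_sq (n : ℕ) (S : Finset (Fin n)) (x : Fin n → Bool) :
    parity n S x * parity n S x = 1 := by
  unfold parity
  rw [← pow_add]
  exact Even.neg_one_pow ⟨_, rfl⟩

lemma parity_abs (n : ℕ) (S : Finset (Fin n)) (x : Fin n → Bool) :
    |parity n S x| = 1 := by
  simp [parity, abs_pow]

lemma parity_vals (n : ℕ) (S : Finset (Fin n)) (x : Fin n → Bool) :
    parity n S x = 1 ∨ parity n S x = -1 := by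
  unfold parity
  rcases Nat.even_or_odd (S.filter (fun i => x i = true)).card with h | h
  · exact Or.inl (Even.neg_one_pow h)
  · exact Or.inr (Odd.neg_one_pow h)

lemma parity_congr {n : ℕ} {S : Finset (Fin n)} {x y : Fin n → Bool}
    (h : ∀ j ∈ S, x j = y j) : parity n S x = parity n S y := by
  unfold parity
  have : Finset.filter (fun i => x i = true) S = Finset.filter (fun i => y i = true) S := by
    apply Finset.filter_congr
    intro j hj
    simp [h j hj]
  rw [this]

lemma parity_flip {n : ℕ} {S : Finset (Fin n)} {i : Fin n} (hi : i ∈ S)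
    (x : Fin n → Bool) :
    parity n S (Function.update x i (!x i)) = - parity n S x := by
  have hS : S = insert i (S.erase i) := (Finset.insert_erase hi).symm
  have key : ∀ z : Fin n → Bool, (S.filter (fun j => z j = true)).card =
      ((S.erase i).filter (fun j => z j = true)).card + (if z i = true then 1 else 0) := by
    intro z
    conv_lhs => rw [hS]
    rw [Finset.filter_insert]
    split
    · rw [Finset.card_insert_of_notMem (by simp)]
    · simp
  have he : ((S.erase i).filter (fun j => Function.update x i (!x i) j = true))
      = ((S.erase i).filter (fun j => x j = true)) := by
    apply Finset.filter_congr
    intro j hj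
    simp [Function.update_of_ne (Finset.ne_of_mem_erase hj)]
  unfold parity
  rw [key, key x, he, Function.update_self]
  cases hxi : x i <;> simp [pow_succ]

lemma parity_sum_zero {n : ℕ} {S : Finset (Fin n)} (hS : S.Nonempty) :
    ∑ x : Fin n → Bool, parity n S x = 0 := by
  obtain ⟨i, hi⟩ := hS
  have hinv : Function.Involutive (fun x : Fin n → Bool => Function.update x i (!x i)) := by
    intro x
    ext j
    rcases eq_or_ne j i with rfl | h
    · simp
    · simp [Function.update_of_ne h]
  have h1 := Equiv.sum_comp (Function.Involutive.toPerm _ hinv) (parity n S)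
  have h2 : ∀ x : Fin n → Bool, parity n S ((Function.Involutive.toPerm _ hinv) x)
      = - parity n S x := by
    intro x
    rw [Function.Involutive.coe_toPerm]
    exact parity_flip hi x
  rw [Finset.sum_congr rfl (fun x _ => h2 x)] at h1
  rw [Finset.sum_neg_distrib] at h1
  linarith

theorem selfbounding_degree_lower_bound (a ε : ℝ) (ha : 1 ≤ a) (hε : 0 < ε)
    (hε4 : ε ≤ 1 / 4) (n : ℕ) (hn : ⌊a / (4 * ε)⌋₊ ≤ n) :
    1 ≤ ⌊a / (4 * ε)⌋₊ ∧
      ∃ f : (Fin n → Bool) → ℝ,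
        SelfBounding n a f ∧ (∀ x, f x ∈ Set.Icc (0 : ℝ) 1) ∧
        ∀ p : (Fin n → Bool) → ℝ, expect n (fun x => |f x - p x|) ≤ ε →
          ∃ S : Finset (Fin n), ⌊a / (4 * ε)⌋₊ ≤ S.card ∧ fourierHat n p S ≠ 0 := by
  set k : ℕ := ⌊a / (4 * ε)⌋₊ with hkdef
  have hk1 : 1 ≤ k := by
    apply Nat.le_floor
    rw [Nat.cast_one, le_div_iff₀ (by positivity)]
    linarith
  have hkR : (1 : ℝ) ≤ (k : ℝ) := by exact_mod_cast hk1
  have hkpos : (0 : ℝ) < (k : ℝ) := by linarith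
  -- the floor bound : k ≤ a / (4ε), so 4 ε k ≤ a
  have hfloor : (k : ℝ) ≤ a / (4 * ε) := Nat.floor_le (by positivity)
  have h4ek : 4 * ε * (k : ℝ) ≤ a := by
    rw [le_div_iff₀ (by positivity)] at hfloor
    linarith
  -- the set S₀ of the first k coordinates
  set S₀ : Finset (Fin n) := Finset.univ.filter (fun i : Fin n => (i : ℕ) < k) with hS₀def
  have hmem : ∀ i : Fin n, i ∈ S₀ ↔ (i : ℕ) < k := by
    intro i; simp [hS₀def]
  have hcard : S₀.card = k := by
    rw [hS₀def]
    have : Finset.univ.filter (fun i : Fin n => (i : ℕ) < k)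
        = Finset.map (Fin.castLEEmb hn) Finset.univ := by
      ext i
      simp only [Finset.mem_filter, Finset.mem_univ, true_and, Finset.mem_map,
        Fin.castLEEmb_apply]
      constructor
      · intro h
        exact ⟨⟨(i : ℕ), h⟩, by ext; simp⟩
      · rintro ⟨j, rfl⟩
        simpa using j.isLt
    rw [this, Finset.card_map, Finset.card_univ, Fintype.card_fin]
  have hS₀ne : S₀.Nonempty := by
    rw [← Finset.card_pos, hcard]; omega
  -- the constant c
  set c : ℝ := min a (k : ℝ) / (k : ℝ) with hcdef
  have hc0 : 0 < c := by
    apply div_pos _ hkpos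
    exact lt_min (by linarith) hkpos
  have hc1 : c ≤ 1 := by
    rw [hcdef, div_le_one hkpos]
    exact min_le_right _ _
  have hkc : (k : ℝ) * c = min a (k : ℝ) := by
    rw [hcdef, mul_div_cancel₀ _ (ne_of_gt hkpos)]
  -- the function f
  set f : (Fin n → Bool) → ℝ := fun x => 1 - c / 2 * (1 - parity n S₀ x) with hfdef
  -- basic values of f
  have hfval : ∀ x, (parity n S₀ x = 1 ∧ f x = 1) ∨ (parity n S₀ x = -1 ∧ f x = 1 - c) := by
    intro x
    rcases parity_vals n S₀ x with h | h
    · left; constructor; exact h; simp [hfdef, h]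
    · right; constructor; exact h; simp [hfdef, h]; ring
  -- f only depends on S₀-coordinates; min over update for i ∉ S₀
  have hmin_out : ∀ (x : Fin n → Bool) (i : Fin n), i ∉ S₀ →
      min (f (Function.update x i false)) (f (Function.update x i true)) = f x := by
    intro x i hi
    have hb : ∀ b : Bool, f (Function.update x i b) = f x := by
      intro b
      have : parity n S₀ (Function.update x i b) = parity n S₀ x := by
        apply parity_congr
        intro j hj
        exact Function.update_of_ne (by rintro rfl; exact hi hj) _ _
      simp [hfdef, this]
    rw [hb false, hb true, min_self]
  -- min over update for i ∈ S₀ is 1 - c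
  have hmin_in : ∀ (x : Fin n → Bool) (i : Fin n), i ∈ S₀ →
      min (f (Function.update x i false)) (f (Function.update x i true)) = 1 - c := by
    intro x i hi
    set u := Function.update x i false with hu
    have hui : u i = false := by simp [hu]
    have hv : Function.update x i true = Function.update u i (!u i) := by
      rw [hui]
      simp [hu, Function.update_idem]
    have hflip : parity n S₀ (Function.update x i true) = - parity n S₀ u := by
      rw [hv]; exact parity_flip hi u
    rcases hfval u with ⟨hp, hf⟩ | ⟨hp, hf⟩
    · have hp2 : parity n S₀ (Function.update x i true) = -1 := by rw [hflip, hp]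
      have hf2 : f (Function.update x i true) = 1 - c := by
        rcases hfval (Function.update x i true) with ⟨h1, h2⟩ | ⟨h1, h2⟩
        · rw [hp2] at h1; norm_num at h1
        · exact h2
      rw [hf, hf2, min_eq_right (by linarith)]
    · have hp2 : parity n S₀ (Function.update x i true) = 1 := by rw [hflip, hp]; norm_num
      have hf2 : f (Function.update x i true) = 1 := by
        rcases hfval (Function.update x i true) with ⟨h1, h2⟩ | ⟨h1, h2⟩
        · exact h2
        · rw [hp2] at h1; norm_num at h1
      rw [hf, hf2, min_eq_left (by linarith)]
  refine ⟨hk1, f, ?_, ?_, ?_⟩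
  · -- SelfBounding
    intro x
    have hterm : ∀ i : Fin n,
        f x - min (f (Function.update x i false)) (f (Function.update x i true))
        = if i ∈ S₀ then f x - (1 - c) else 0 := by
      intro i
      by_cases hi : i ∈ S₀
      · rw [if_pos hi, hmin_in x i hi]
      · rw [if_neg hi, hmin_out x i hi]; ring
    constructor
    · intro i
      rw [hterm i]
      rcases hfval x with ⟨_, hf⟩ | ⟨_, hf⟩ <;> split <;> simp [hf] <;> linarith
    · rw [Finset.sum_congr rfl (fun i _ => hterm i)]
      rw [Finset.sum_ite_mem, Finset.univ_inter, Finset.sum_const, hcard, nsmul_eq_mul]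
      rcases hfval x with ⟨_, hf⟩ | ⟨_, hf⟩
      · rw [hf]
        rw [show (1:ℝ) - (1 - c) = c by ring, hkc, mul_one]
        exact min_le_left _ _
      · rw [hf]
        have h1 : (k : ℝ) * (1 - c - (1 - c)) = 0 := by ring
        rw [h1]
        have : 0 ≤ 1 - c := by linarith
        positivity
  · -- range
    intro x
    rcases hfval x with ⟨_, hf⟩ | ⟨_, hf⟩ <;> rw [hf] <;> constructor <;> linarith
  · -- approximation lower bound
    intro p hp
    refine ⟨S₀, le_of_eq hcard.symm, ?_⟩
    intro hzero
    -- Fourier coefficient of f at S₀ is c/2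
    have hprod : ∀ x, f x * parity n S₀ x = (1 - c / 2) * parity n S₀ x + c / 2 := by
      intro x
      have h1 := parity_sq n S₀ x
      simp only [hfdef]
      linear_combination (c / 2) * h1
    have hcardfun : (Finset.univ : Finset (Fin n → Bool)).card = 2 ^ n := by
      simp [Finset.card_univ]
    have hfhat : fourierHat n f S₀ = c / 2 := by
      unfold fourierHat expect
      rw [Finset.sum_congr rfl (fun x _ => hprod x)]
      rw [Finset.sum_add_distrib, ← Finset.mul_sum, parity_sum_zero hS₀ne,
        Finset.sum_const, hcardfun, nsmul_eq_mul]
      field_simp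
      push_cast; ring
    -- difference bound
    have hsub : fourierHat n f S₀ - fourierHat n p S₀
        = expect n (fun x => (f x - p x) * parity n S₀ x) := by
      unfold fourierHat expect
      rw [div_sub_div_same, ← Finset.sum_sub_distrib]
      congr 1
      apply Finset.sum_congr rfl
      intro x _
      ring
    have habs : |expect n (fun x => (f x - p x) * parity n S₀ x)|
        ≤ expect n (fun x => |f x - p x|) := by
      unfold expect
      rw [abs_div, abs_of_pos (by positivity : (0:ℝ) < (2:ℝ)^n)]
      apply div_le_div_of_nonneg_right ?_ (by positivity)
      calc |∑ x : Fin n → Bool, (f x - p x) * parity n S₀ x|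
          ≤ ∑ x : Fin n → Bool, |(f x - p x) * parity n S₀ x| :=
            Finset.abs_sum_le_sum_abs _ _
        _ = ∑ x : Fin n → Bool, |f x - p x| := by
            apply Finset.sum_congr rfl
            intro x _
            rw [abs_mul, parity_abs, mul_one]
    have hbound : c / 2 ≤ ε := by
      have h1 : |fourierHat n f S₀ - fourierHat n p S₀| ≤ ε := by
        rw [hsub]; exact le_trans habs hp
      rw [hzero, sub_zero, hfhat] at h1
      rwa [abs_of_pos (by linarith)] at h1
    -- but ε < c/2
    have hlt : ε < c / 2 := by
      rcases le_or_gt a (k : ℝ) with hak | hak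
      · have : c = a / (k : ℝ) := by rw [hcdef, min_eq_left hak]
        rw [this, div_div, lt_div_iff₀ (by positivity)]
        nlinarith [mul_pos hε hkpos]
      · have : c = 1 := by
          rw [hcdef, min_eq_right (le_of_lt hak), div_self (ne_of_gt hkpos)]
        rw [this]
        linarith
    linarith
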